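/- Let μ and ν be compactly supported Borel probability measures on ℝ^d and let c : ℝ^d × ℝ^d → ℝ be continuous. For h > 0 let μ^h and ν^h be the discretized measures of μ and ν on the grid hℤ^d. Let (h_k) be a sequence of positive reals tending to 0, and for each k let π_k be an optimal coupling of μ^{h_k} and ν^{h_k} for the cost c (this is a finite-dimensional linear program since μ^{h_k} and ν^{h_k} are finitely supported). Then there exists a subsequence of (π_k) converging weakly to a probability measure π which is an optimal coupling of μ and ν for the cost c. -/

import Mathlib

open MeasureTheory Filter Topology

noncomputable section

/-- Weak convergence of a sequence of measures: the integrals of every bounded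
continuous function converge. -/
def WeakConvSeq {α : Type*} [MeasurableSpace α] [TopologicalSpace α]
    (μs : ℕ → Measure α) (μ : Measure α) : Prop :=
  ∀ f : BoundedContinuousFunction α ℝ,
    Tendsto (fun k => ∫ x, f x ∂(μs k)) atTop (𝓝 (∫ x, f x ∂μ))

/-- A coupling (transference plan) of `μ` and `ν`: a measure on the product
whose marginals are `μ` and `ν`. -/
def IsCoupling {α β : Type*} [MeasurableSpace α] [MeasurableSpace β]
    (π : Measure (α × β)) (μ : Measure α) (ν : Measure β) : Prop :=
  π.map Prod.fst = μ ∧ π.map Prod.snd = ν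

/-- An optimal coupling of `μ` and `ν` for the cost `c`. -/
def IsOptimalCoupling {α β : Type*} [MeasurableSpace α] [MeasurableSpace β]
    (c : α × β → ℝ) (π : Measure (α × β)) (μ : Measure α) (ν : Measure β) : Prop :=
  IsCoupling π μ ν ∧
    ∀ π' : Measure (α × β), IsCoupling π' μ ν → ∫ q, c q ∂π ≤ ∫ q, c q ∂π'

/-- The grid point `z = h·m` of the grid `hℤ^d`. -/
def gridPoint (d : ℕ) (h : ℝ) (m : Fin d → ℤ) : Fin d → ℝ :=
  fun i => h * m i

/-- The half-open axis-aligned cube `R_h(z) = z + [-h/2, h/2)^d` of side length `h`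
centered at the grid point `z = h·m`.  These cubes partition `ℝ^d`. -/
def gridCube (d : ℕ) (h : ℝ) (m : Fin d → ℤ) : Set (Fin d → ℝ) :=
  {x | ∀ i, h * m i - h / 2 ≤ x i ∧ x i < h * m i + h / 2}

/-- The discretized measure `μ^h = Σ_{z ∈ hℤ^d} μ(R_h(z)) δ_z`. -/
def discretize {d : ℕ} (h : ℝ) (μ : Measure (Fin d → ℝ)) : Measure (Fin d → ℝ) :=
  Measure.sum fun m : Fin d → ℤ =>
    μ (gridCube d h m) • Measure.dirac (gridPoint d h m)

namespace LPaux

open Set Metric TopologicalSpace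

variable {d : ℕ}

def Mm (d : ℕ) (h : ℝ) (x : Fin d → ℝ) : Fin d → ℤ := fun i => ⌊x i / h + 1/2⌋

def Tm (d : ℕ) (h : ℝ) (x : Fin d → ℝ) : Fin d → ℝ := fun i => h * (⌊x i / h + 1/2⌋ : ℤ)

lemma Tm_eq_comp (h : ℝ) : Tm d h = gridPoint d h ∘ Mm d h := rfl

lemma measurable_Mm (h : ℝ) : Measurable (Mm d h) :=
  measurable_pi_lambda _ fun i => (((measurable_pi_apply i).div_const _).add_const _).floor

lemma measurable_gridPoint (h : ℝ) : Measurable (gridPoint d h) :=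
  measurable_pi_lambda _ fun i =>
    measurable_const.mul (Measurable.of_discrete.comp (measurable_pi_apply i))

lemma measurable_Tm (h : ℝ) : Measurable (Tm d h) := by
  rw [Tm_eq_comp]; exact (measurable_gridPoint h).comp (measurable_Mm h)

lemma mem_gridCube_iff {h : ℝ} (hh : 0 < h) {x : Fin d → ℝ} {m : Fin d → ℤ} :
    x ∈ gridCube d h m ↔ Mm d h x = m := by
  simp only [gridCube, mem_setOf_eq, Mm, funext_iff]
  refine forall_congr' fun i => ?_
  have hxh : h * (x i / h) = x i := by field_simp
  constructor
  · rintro ⟨a, b⟩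
    rw [Int.floor_eq_iff]
    constructor <;> nlinarith [hxh]
  · intro hm
    rw [Int.floor_eq_iff] at hm
    obtain ⟨a, b⟩ := hm
    constructor <;>
      nlinarith [hxh, mul_le_mul_of_nonneg_left a hh.le, mul_lt_mul_of_pos_left b hh]

lemma gridCube_eq_preimage {h : ℝ} (hh : 0 < h) (m : Fin d → ℤ) :
    gridCube d h m = Mm d h ⁻¹' {m} := by
  ext x; simpa [Set.mem_preimage] using mem_gridCube_iff hh

lemma discretize_eq_map {h : ℝ} (hh : 0 < h) (μ : Measure (Fin d → ℝ)) :
    discretize h μ = μ.map (Tm d h) := by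
  rw [Tm_eq_comp, ← Measure.map_map (measurable_gridPoint h) (measurable_Mm h),
    Measure.map_eq_sum μ (Mm d h) (measurable_Mm h),
    Measure.map_sum (measurable_gridPoint h).aemeasurable]
  unfold discretize
  congr 1
  ext m : 1
  rw [Measure.map_smul, Measure.map_dirac' (measurable_gridPoint h), gridCube_eq_preimage hh]

lemma isProbabilityMeasure_discretize {h : ℝ} (hh : 0 < h) {μ : Measure (Fin d → ℝ)}
    (hμ : IsProbabilityMeasure μ) : IsProbabilityMeasure (discretize h μ) := by
  rw [discretize_eq_map hh]
  exact Measure.isProbabilityMeasure_map (measurable_Tm h).aemeasurable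

lemma dist_Tm_le {h : ℝ} (hh : 0 < h) (x : Fin d → ℝ) : dist (Tm d h x) x ≤ h / 2 := by
  rw [dist_pi_le_iff (by positivity)]
  intro i
  rw [Real.dist_eq, abs_le]
  simp only [Tm]
  have h1 := Int.floor_le (x i / h + 1/2)
  have h2 := Int.lt_floor_add_one (x i / h + 1/2)
  have hu : h * (x i / h + 1/2) = x i + h / 2 := by field_simp
  constructor
  · nlinarith [mul_lt_mul_of_pos_left h2 hh]
  · nlinarith [mul_le_mul_of_nonneg_left h1 hh.le]

lemma tendsto_Tm {hs : ℕ → ℝ} (hspos : ∀ k, 0 < hs k) (hslim : Tendsto hs atTop (𝓝 0))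
    (x : Fin d → ℝ) : Tendsto (fun k => Tm d (hs k) x) atTop (𝓝 x) := by
  rw [tendsto_iff_dist_tendsto_zero]
  refine squeeze_zero (fun k => dist_nonneg) (fun k => dist_Tm_le (hspos k) x) ?_
  simpa using hslim.div_const 2

lemma Tm_mem_closedBall {h R H : ℝ} (hh : 0 < h) (hhH : h ≤ H) {x : Fin d → ℝ}
    (hx : x ∈ closedBall (0 : Fin d → ℝ) R) :
    Tm d h x ∈ closedBall (0 : Fin d → ℝ) (R + H) := by
  rw [mem_closedBall] at hx ⊢
  calc dist (Tm d h x) 0 ≤ dist (Tm d h x) x + dist x 0 := dist_triangle _ _ _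
    _ ≤ h / 2 + R := add_le_add (dist_Tm_le hh x) hx
    _ ≤ R + H := by linarith

lemma discretize_compl_eq_zero {h R H : ℝ} (hh : 0 < h) (hhH : h ≤ H)
    {μ : Measure (Fin d → ℝ)} {K : Set (Fin d → ℝ)} (hKR : K ⊆ closedBall 0 R)
    (hKμ : μ Kᶜ = 0) :
    discretize h μ (closedBall (0 : Fin d → ℝ) (R + H))ᶜ = 0 := by
  rw [discretize_eq_map hh,
    Measure.map_apply (measurable_Tm h) measurableSet_closedBall.compl]
  refine measure_mono_null ?_ hKμ
  intro x hx
  simp only [Set.mem_preimage, Set.mem_compl_iff] at hx ⊢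
  exact fun hxK => hx (Tm_mem_closedBall hh hhH (hKR hxK))

lemma tendsto_integral_discretize {hs : ℕ → ℝ} (hspos : ∀ k, 0 < hs k)
    (hslim : Tendsto hs atTop (𝓝 0)) {μ : Measure (Fin d → ℝ)}
    (hμ : IsProbabilityMeasure μ) (f : BoundedContinuousFunction (Fin d → ℝ) ℝ) :
    Tendsto (fun k => ∫ x, f x ∂(discretize (hs k) μ)) atTop (𝓝 (∫ x, f x ∂μ)) := by
  have hrw : ∀ k, ∫ x, f x ∂(discretize (hs k) μ) = ∫ x, f (Tm d (hs k) x) ∂μ := fun k => by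
    rw [discretize_eq_map (hspos k),
      integral_map (measurable_Tm (hs k)).aemeasurable
        f.continuous.measurable.aestronglyMeasurable]
  simp only [hrw]
  refine tendsto_integral_of_dominated_convergence (fun _ => ‖f‖)
    (fun k => (f.continuous.measurable.comp (measurable_Tm (hs k))).aestronglyMeasurable)
    (integrable_const _) (fun k => Eventually.of_forall fun x => f.norm_coe_le_norm _)
    (Eventually.of_forall fun x => ?_)
  exact (f.continuous.tendsto x).comp (tendsto_Tm hspos hslim x)

lemma prob_of_coupling {α β : Type*} [MeasurableSpace α] [MeasurableSpace β]
    {π : Measure (α × β)} {μ : Measure α} {ν : Measure β} (h : IsCoupling π μ ν)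
    (hμ : IsProbabilityMeasure μ) : IsProbabilityMeasure π := by
  constructor
  have h1 : π.map Prod.fst Set.univ = μ Set.univ := by rw [h.1]
  rwa [Measure.map_apply measurable_fst MeasurableSet.univ, Set.preimage_univ,
    hμ.measure_univ] at h1

lemma coupling_compl_zero {α β : Type*} [MeasurableSpace α] [MeasurableSpace β]
    {π : Measure (α × β)} {μ : Measure α} {ν : Measure β} (h : IsCoupling π μ ν)
    {A : Set α} {B : Set β} (mA : MeasurableSet A) (mB : MeasurableSet B)
    (hA : μ Aᶜ = 0) (hB : ν Bᶜ = 0) : π (A ×ˢ B)ᶜ = 0 := by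
  have h1 : π (Prod.fst ⁻¹' Aᶜ) = 0 := by
    rw [← Measure.map_apply measurable_fst mA.compl, h.1]; exact hA
  have h2 : π (Prod.snd ⁻¹' Bᶜ) = 0 := by
    rw [← Measure.map_apply measurable_snd mB.compl, h.2]; exact hB
  refine measure_mono_null ?_ (measure_union_null h1 h2)
  intro x hx
  simp only [Set.mem_compl_iff, Set.mem_prod, not_and_or] at hx
  rcases hx with hx | hx
  · exact Or.inl hx
  · exact Or.inr hx

lemma ae_eqOn {Ω : Type*} [MeasurableSpace Ω] {ρ : Measure Ω} {Q : Set Ω}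
    (hρ : ρ Qᶜ = 0) {f g : Ω → ℝ} (hfg : Set.EqOn f g Q) : f =ᵐ[ρ] g :=
  ae_iff.mpr (measure_mono_null (fun x hx hxQ => hx (hfg hxQ)) hρ)

lemma abs_integral_diff_le {Ω : Type*} [MeasurableSpace Ω] [TopologicalSpace Ω]
    [OpensMeasurableSpace Ω] {ρ : Measure Ω} [IsProbabilityMeasure ρ] {Q : Set Ω}
    (hρ : ρ Qᶜ = 0) (f g : BoundedContinuousFunction Ω ℝ) {ε : ℝ}
    (hb : ∀ x ∈ Q, |f x - g x| ≤ ε) : |∫ x, f x ∂ρ - ∫ x, g x ∂ρ| ≤ ε := by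
  rw [← integral_sub (f.integrable ρ) (g.integrable ρ)]
  have hae : ∀ᵐ x ∂ρ, ‖f x - g x‖ ≤ ε := by
    refine ae_iff.mpr (measure_mono_null ?_ hρ)
    intro x hx hxQ
    exact hx (by rw [Real.norm_eq_abs]; exact hb x hxQ)
  have := norm_integral_le_of_norm_le_const (μ := ρ) (f := fun x => f x - g x) hae
  simpa using this

end LPaux

open Set Metric TopologicalSpace LPaux in
open scoped ENNReal NNReal in
set_option maxHeartbeats 2000000 in
/-- Convergence of the linear programming approximation: if `π_k` is an optimal
coupling of the discretized measures `μ^{h_k}` and `ν^{h_k}` for a continuous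
cost `c`, where `h_k → 0`, then a subsequence of `π_k` converges weakly to an
optimal coupling of `μ` and `ν` for the cost `c`. -/
theorem convergence_of_LP_solutions
    {d : ℕ} (μ ν : Measure (Fin d → ℝ))
    (hμ : IsProbabilityMeasure μ) (hν : IsProbabilityMeasure ν)
    (hμcompact : ∃ K : Set (Fin d → ℝ), IsCompact K ∧ μ Kᶜ = 0)
    (hνcompact : ∃ K : Set (Fin d → ℝ), IsCompact K ∧ ν Kᶜ = 0)
    (c : (Fin d → ℝ) × (Fin d → ℝ) → ℝ) (hc : Continuous c)
    (hs : ℕ → ℝ) (hspos : ∀ k, 0 < hs k) (hslim : Tendsto hs atTop (𝓝 0))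
    (πs : ℕ → Measure ((Fin d → ℝ) × (Fin d → ℝ)))
    (hπs : ∀ k, IsOptimalCoupling c (πs k) (discretize (hs k) μ) (discretize (hs k) ν)) :
    ∃ (φ : ℕ → ℕ) (π : Measure ((Fin d → ℝ) × (Fin d → ℝ))), StrictMono φ ∧
      IsProbabilityMeasure π ∧
      WeakConvSeq (fun k => πs (φ k)) π ∧
      IsOptimalCoupling c π μ ν := by
  classical
  obtain ⟨K, hK, hKμ⟩ := hμcompact
  obtain ⟨L, hL, hLν⟩ := hνcompact
  obtain ⟨R1, hKR1⟩ := hK.isBounded.subset_closedBall 0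
  obtain ⟨R2, hLR2⟩ := hL.isBounded.subset_closedBall 0
  set R : ℝ := max R1 R2 with hRdef
  have hKR : K ⊆ closedBall 0 R := hKR1.trans (closedBall_subset_closedBall (le_max_left _ _))
  have hLR : L ⊆ closedBall 0 R := hLR2.trans (closedBall_subset_closedBall (le_max_right _ _))
  obtain ⟨H, hH⟩ : ∃ H, ∀ k, hs k ≤ H := by
    obtain ⟨b, hb⟩ := hslim.bddAbove_range
    exact ⟨b, fun k => hb (Set.mem_range_self k)⟩
  set B : Set (Fin d → ℝ) := closedBall (0 : Fin d → ℝ) (R + H) with hBdef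
  have hBc : IsCompact B := isCompact_closedBall _ _
  set Q : Set ((Fin d → ℝ) × (Fin d → ℝ)) := B ×ˢ B with hQdef
  have hQc : IsCompact Q := hBc.prod hBc
  have hQcl : IsClosed Q := hQc.isClosed
  -- discretized measures: probability measures concentrated on `B`
  have hdμP : ∀ k, IsProbabilityMeasure (discretize (hs k) μ) := fun k =>
    isProbabilityMeasure_discretize (hspos k) hμ
  have hdνP : ∀ k, IsProbabilityMeasure (discretize (hs k) ν) := fun k =>
    isProbabilityMeasure_discretize (hspos k) hν
  have hdμB : ∀ k, discretize (hs k) μ Bᶜ = 0 := fun k =>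
    discretize_compl_eq_zero (hspos k) (hH k) hKR hKμ
  have hdνB : ∀ k, discretize (hs k) ν Bᶜ = 0 := fun k =>
    discretize_compl_eq_zero (hspos k) (hH k) hLR hLν
  have hπP : ∀ k, IsProbabilityMeasure (πs k) := fun k =>
    prob_of_coupling (hπs k).1 (hdμP k)
  have hπQ : ∀ k, πs k Qᶜ = 0 := fun k =>
    coupling_compl_zero (hπs k).1 measurableSet_closedBall measurableSet_closedBall
      (hdμB k) (hdνB k)
  -- a countable family of test functions, uniformly dense on `Q`
  haveI : CompactSpace Q := isCompact_iff_compactSpace.mp hQc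
  haveI : Nonempty C(Q, ℝ) := ⟨0⟩
  obtain ⟨es, hes⟩ : ∃ es : ℕ → BoundedContinuousFunction ((Fin d → ℝ) × (Fin d → ℝ)) ℝ,
      ∀ (f : BoundedContinuousFunction ((Fin d → ℝ) × (Fin d → ℝ)) ℝ) (ε : ℝ), 0 < ε →
        ∃ n, ∀ x ∈ Q, |f x - es n x| ≤ ε := by
    set gs : ℕ → C(Q, ℝ) := denseSeq C(Q, ℝ) with hgsdef
    have hgs : DenseRange gs := denseRange_denseSeq _
    have hext : ∀ n, ∃ e : BoundedContinuousFunction ((Fin d → ℝ) × (Fin d → ℝ)) ℝ,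
        ∀ q : Q, e ↑q = gs n q := by
      intro n
      obtain ⟨g, -, hg⟩ :=
        (BoundedContinuousFunction.mkOfCompact (gs n)).exists_extension_norm_eq_of_isClosedEmbedding
          (IsClosedEmbedding.subtypeVal hQcl)
      exact ⟨g, fun q => congrFun hg q⟩
    choose es hes0 using hext
    refine ⟨es, fun f ε hε => ?_⟩
    set fQ : C(Q, ℝ) := ⟨fun q => f ↑q, f.continuous.comp continuous_subtype_val⟩ with hfQ
    obtain ⟨n, hn⟩ := Metric.denseRange_iff.mp hgs fQ ε hε
    refine ⟨n, fun x hx => ?_⟩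
    have h1 : dist (fQ ⟨x, hx⟩) (gs n ⟨x, hx⟩) ≤ dist fQ (gs n) :=
      ContinuousMap.dist_apply_le_dist _
    have h2 : fQ ⟨x, hx⟩ = f x := rfl
    have h3 : gs n ⟨x, hx⟩ = es n x := (hes0 n ⟨x, hx⟩).symm
    rw [h2, h3] at h1
    rw [← Real.dist_eq]
    exact h1.trans hn.le
  -- diagonal extraction of a subsequence along which all `∫ es n` converge
  obtain ⟨φ, hφ, hconv⟩ : ∃ φ : ℕ → ℕ, StrictMono φ ∧
      ∀ n, ∃ l, Tendsto (fun k => ∫ x, es n x ∂(πs (φ k))) atTop (𝓝 l) := by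
    have hmem : ∀ k, (fun n => ∫ x, es n x ∂(πs k)) ∈
        {w : ℕ → ℝ | ∀ n, w n ∈ Icc (-‖es n‖) ‖es n‖} := by
      intro k n
      haveI := hπP k
      rw [mem_Icc, ← abs_le]
      have := norm_integral_le_of_norm_le_const (μ := πs k) (f := fun x => es n x)
        (Eventually.of_forall fun x => (es n).norm_coe_le_norm x)
      simpa using this
    obtain ⟨w, -, φ, hφ, hconv⟩ :=
      (isCompact_pi_infinite fun n => isCompact_Icc).tendsto_subseq hmem
    exact ⟨φ, hφ, fun n => ⟨w n, tendsto_pi_nhds.mp hconv n⟩⟩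
  have hπPφ : ∀ k, IsProbabilityMeasure (πs (φ k)) := fun k => hπP (φ k)
  -- the limit functional on all bounded continuous functions
  have hΛex : ∀ f : BoundedContinuousFunction ((Fin d → ℝ) × (Fin d → ℝ)) ℝ,
      ∃ l, Tendsto (fun k => ∫ x, f x ∂(πs (φ k))) atTop (𝓝 l) := by
    intro f
    apply cauchySeq_tendsto_of_complete
    rw [Metric.cauchySeq_iff]
    intro ε hε
    obtain ⟨n, hn⟩ := hes f (ε/4) (by positivity)
    obtain ⟨l, hl⟩ := hconv n
    obtain ⟨N, hN⟩ := (Metric.tendsto_atTop.mp hl) (ε/4) (by positivity)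
    refine ⟨N, fun a ha b hb => ?_⟩
    have key : ∀ k, |∫ x, f x ∂(πs (φ k)) - ∫ x, es n x ∂(πs (φ k))| ≤ ε/4 := fun k => by
      haveI := hπPφ k
      exact abs_integral_diff_le (hπQ (φ k)) f (es n) hn
    have da := hN a ha
    have db := hN b hb
    rw [Real.dist_eq] at da db ⊢
    have t1 := key a
    have t2 := key b
    have tri : |∫ x, f x ∂(πs (φ a)) - ∫ x, f x ∂(πs (φ b))| ≤
        |∫ x, f x ∂(πs (φ a)) - ∫ x, es n x ∂(πs (φ a))| +
        (|∫ x, es n x ∂(πs (φ a)) - l| +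
          (|l - ∫ x, es n x ∂(πs (φ b))| +
            |∫ x, es n x ∂(πs (φ b)) - ∫ x, f x ∂(πs (φ b))|)) := by
      have := abs_sub_le (∫ x, f x ∂(πs (φ a))) (∫ x, es n x ∂(πs (φ a)))
        (∫ x, f x ∂(πs (φ b)))
      have h2 := abs_sub_le (∫ x, es n x ∂(πs (φ a))) l (∫ x, f x ∂(πs (φ b)))
      have h3 := abs_sub_le l (∫ x, es n x ∂(πs (φ b))) (∫ x, f x ∂(πs (φ b)))
      linarith
    have hab : |l - ∫ x, es n x ∂(πs (φ b))| < ε/4 := by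
      rw [abs_sub_comm]; exact db
    have hba : |∫ x, es n x ∂(πs (φ b)) - ∫ x, f x ∂(πs (φ b))| ≤ ε/4 := by
      rw [abs_sub_comm]; exact t2
    linarith
  choose Λ hΛ using hΛex
  -- basic properties of the functional Λ
  have hΛone : Λ 1 = 1 := by
    refine tendsto_nhds_unique (hΛ 1) ?_
    have h1 : ∀ k, ∫ x, (1 : BoundedContinuousFunction ((Fin d → ℝ) × (Fin d → ℝ)) ℝ) x
        ∂(πs (φ k)) = 1 := fun k => by
      haveI := hπPφ k
      simp
    simp only [h1]
    exact tendsto_const_nhds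
  have hΛnn : ∀ f : BoundedContinuousFunction ((Fin d → ℝ) × (Fin d → ℝ)) ℝ,
      (∀ x, 0 ≤ f x) → 0 ≤ Λ f := fun f hf =>
    ge_of_tendsto (hΛ f) (Eventually.of_forall fun k => integral_nonneg hf)
  have hΛadd : ∀ f g : BoundedContinuousFunction ((Fin d → ℝ) × (Fin d → ℝ)) ℝ,
      Λ (f + g) = Λ f + Λ g := by
    intro f g
    refine tendsto_nhds_unique (hΛ (f + g)) ?_
    have h1 : ∀ k, ∫ x, (f + g) x ∂(πs (φ k)) =
        (∫ x, f x ∂(πs (φ k))) + ∫ x, g x ∂(πs (φ k)) := fun k => by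
      haveI := hπPφ k
      simp only [BoundedContinuousFunction.coe_add, Pi.add_apply]
      exact integral_add (f.integrable _) (g.integrable _)
    simp only [h1]
    exact (hΛ f).add (hΛ g)
  have hΛ_ge_one : ∀ f : BoundedContinuousFunction ((Fin d → ℝ) × (Fin d → ℝ)) ℝ,
      (∀ x, 0 ≤ f x) → (∀ x ∈ Q, 1 ≤ f x) → 1 ≤ Λ f := by
    intro f h0 h1
    refine ge_of_tendsto (hΛ f) (Eventually.of_forall fun k => ?_)
    haveI := hπPφ k
    have hQ1 : πs (φ k) Q = 1 := by
      have hh := measure_add_measure_compl (μ := πs (φ k)) hQcl.measurableSet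
      rw [hπQ (φ k), add_zero] at hh
      rw [hh, measure_univ]
    calc (1 : ℝ) = ∫ x, Q.indicator (fun _ => (1:ℝ)) x ∂(πs (φ k)) := by
          rw [integral_indicator_const _ hQcl.measurableSet, measureReal_def, hQ1]; simp
      _ ≤ ∫ x, f x ∂(πs (φ k)) := by
          refine integral_mono ((integrable_const (1:ℝ)).indicator hQcl.measurableSet)
            (f.integrable _) fun x => ?_
          by_cases hx : x ∈ Q
          · simp only [indicator_of_mem hx]; exact h1 x hx
          · simp only [indicator_of_notMem hx]; exact h0 x
  have hΛ_zero_on : ∀ f : BoundedContinuousFunction ((Fin d → ℝ) × (Fin d → ℝ)) ℝ,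
      Set.EqOn (⇑f) 0 Q → Λ f = 0 := by
    intro f hf
    refine tendsto_nhds_unique (hΛ f) ?_
    have h1 : ∀ k, ∫ x, f x ∂(πs (φ k)) = 0 := fun k => by
      haveI := hπPφ k
      rw [integral_congr_ae (ae_eqOn (hπQ (φ k)) hf)]
      simp
    simp only [h1]
    exact tendsto_const_nhds
  -- the Riesz-type content associated with Λ
  have hbddB : ∀ s : Set ((Fin d → ℝ) × (Fin d → ℝ)),
      BddBelow (Λ '' {f | (∀ x, 0 ≤ f x) ∧ ∀ x ∈ s, 1 ≤ f x}) := fun s =>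
    ⟨0, by rintro y ⟨f, hf, rfl⟩; exact hΛnn f hf.1⟩
  have hne : ∀ s : Set ((Fin d → ℝ) × (Fin d → ℝ)),
      (Λ '' {f | (∀ x, 0 ≤ f x) ∧ ∀ x ∈ s, 1 ≤ f x}).Nonempty := fun s =>
    ⟨Λ 1, 1, ⟨fun x => by simp, fun x _ => by simp⟩, rfl⟩
  set lam0 : Set ((Fin d → ℝ) × (Fin d → ℝ)) → ℝ :=
    fun s => sInf (Λ '' {f | (∀ x, 0 ≤ f x) ∧ ∀ x ∈ s, 1 ≤ f x}) with hlam0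
  have hlam_le : ∀ (s : Set ((Fin d → ℝ) × (Fin d → ℝ)))
      (f : BoundedContinuousFunction ((Fin d → ℝ) × (Fin d → ℝ)) ℝ),
      (∀ x, 0 ≤ f x) → (∀ x ∈ s, 1 ≤ f x) → lam0 s ≤ Λ f :=
    fun s f h0 h1 => csInf_le (hbddB s) ⟨f, ⟨h0, h1⟩, rfl⟩
  have hlam_nn : ∀ s, 0 ≤ lam0 s := fun s =>
    le_csInf (hne s) (by rintro y ⟨f, hf, rfl⟩; exact hΛnn f hf.1)
  have hlam_mono : ∀ s t : Set ((Fin d → ℝ) × (Fin d → ℝ)), s ⊆ t → lam0 s ≤ lam0 t :=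
    fun s t hst => csInf_le_csInf (hbddB s) (hne t)
      (Set.image_mono fun f hf => ⟨hf.1, fun x hx => hf.2 x (hst hx)⟩)
  have hlam_le_one : ∀ s, lam0 s ≤ 1 := fun s => by
    have h := hlam_le s 1 (fun x => by simp) (fun x _ => by simp)
    rwa [hΛone] at h
  have hlam_subadd : ∀ s t : Set ((Fin d → ℝ) × (Fin d → ℝ)),
      lam0 (s ∪ t) ≤ lam0 s + lam0 t := by
    intro s t
    refine le_of_forall_pos_le_add fun ε hε => ?_
    obtain ⟨y1, ⟨f, hf, rfl⟩, hy1⟩ :=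
      exists_lt_of_csInf_lt (hne s) (lt_add_of_pos_right (lam0 s) (half_pos hε))
    obtain ⟨y2, ⟨g, hg, rfl⟩, hy2⟩ :=
      exists_lt_of_csInf_lt (hne t) (lt_add_of_pos_right (lam0 t) (half_pos hε))
    have hcand : lam0 (s ∪ t) ≤ Λ (f + g) := by
      refine hlam_le _ _ (fun x => by
        simp only [BoundedContinuousFunction.coe_add, Pi.add_apply]
        exact add_nonneg (hf.1 x) (hg.1 x)) ?_
      rintro x (hx | hx) <;>
        simp only [BoundedContinuousFunction.coe_add, Pi.add_apply]
      · have := hf.2 x hx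
        have := hg.1 x
        linarith
      · have := hg.2 x hx
        have := hf.1 x
        linarith
    rw [hΛadd] at hcand
    linarith
  -- helper: turn a continuous function with values in [0,1] into a BCF
  have mkb : ∀ (χ : C((Fin d → ℝ) × (Fin d → ℝ), ℝ)), (∀ x, χ x ∈ Icc (0:ℝ) 1) →
      ∃ χb : BoundedContinuousFunction ((Fin d → ℝ) × (Fin d → ℝ)) ℝ, ∀ x, χb x = χ x := by
    intro χ hχ
    refine ⟨BoundedContinuousFunction.ofNormedAddCommGroup χ χ.continuous 1 fun x => ?_, fun x => rfl⟩
    rw [Real.norm_eq_abs, abs_le]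
    exact ⟨by linarith [(hχ x).1], (hχ x).2⟩
  have hlam_superadd : ∀ K₁ K₂ : Compacts ((Fin d → ℝ) × (Fin d → ℝ)),
      Disjoint (K₁ : Set ((Fin d → ℝ) × (Fin d → ℝ))) (↑K₂ : Set ((Fin d → ℝ) × (Fin d → ℝ))) →
      lam0 ↑K₁ + lam0 ↑K₂ ≤ lam0 (↑K₁ ∪ ↑K₂) := by
    intro K₁ K₂ hdisj
    refine le_csInf (hne _) ?_
    rintro y ⟨f, ⟨hf0, hf1⟩, rfl⟩
    obtain ⟨χ, hχ1, hχ0, -, hχ01⟩ :=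
      exists_continuous_one_zero_of_isCompact K₁.isCompact K₂.isCompact.isClosed hdisj
    obtain ⟨χb, hχb⟩ := mkb χ hχ01
    have e1 : lam0 ↑K₁ ≤ Λ (f * χb) := by
      refine hlam_le _ _ (fun x => by
        simp only [BoundedContinuousFunction.coe_mul, Pi.mul_apply]
        exact mul_nonneg (hf0 x) (by rw [hχb]; exact (hχ01 x).1)) ?_
      intro x hx
      simp only [BoundedContinuousFunction.coe_mul, Pi.mul_apply]
      rw [hχb, hχ1 hx]
      simpa using hf1 x (Or.inl hx)
    have e2 : lam0 ↑K₂ ≤ Λ (f * (1 - χb)) := by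
      refine hlam_le _ _ (fun x => by
        simp only [BoundedContinuousFunction.coe_mul, Pi.mul_apply,
          BoundedContinuousFunction.coe_sub, BoundedContinuousFunction.coe_one,
          Pi.sub_apply, Pi.one_apply]
        exact mul_nonneg (hf0 x) (by rw [hχb]; linarith [(hχ01 x).2])) ?_
      intro x hx
      simp only [BoundedContinuousFunction.coe_mul, Pi.mul_apply,
        BoundedContinuousFunction.coe_sub, BoundedContinuousFunction.coe_one,
        Pi.sub_apply, Pi.one_apply]
      rw [hχb, hχ0 hx]
      simpa using hf1 x (Or.inr hx)
    have e3 : Λ (f * χb) + Λ (f * (1 - χb)) = Λ f := by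
      rw [← hΛadd]
      congr 1
      ring
    linarith
  -- the content and the candidate limit measure
  set C0 : MeasureTheory.Content ((Fin d → ℝ) × (Fin d → ℝ)) :=
    { toFun := fun s => Real.toNNReal (lam0 ↑s)
      mono' := fun K₁ K₂ h => Real.toNNReal_mono (hlam_mono _ _ h)
      sup_disjoint' := by
        intro K₁ K₂ hd _ _
        have he : lam0 ↑(K₁ ⊔ K₂) = lam0 ↑K₁ + lam0 ↑K₂ := by
          rw [Compacts.coe_sup]
          exact le_antisymm (hlam_subadd _ _) (hlam_superadd K₁ K₂ hd)
        rw [he, Real.toNNReal_add (hlam_nn _) (hlam_nn _)]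
      sup_le' := by
        intro K₁ K₂
        have he : lam0 ↑(K₁ ⊔ K₂) ≤ lam0 ↑K₁ + lam0 ↑K₂ := by
          rw [Compacts.coe_sup]
          exact hlam_subadd _ _
        exact (Real.toNNReal_mono he).trans Real.toNNReal_add_le } with hC0
  set π0 : Measure ((Fin d → ℝ) × (Fin d → ℝ)) := C0.measure with hπ0def
  have hopen : ∀ (U : Set ((Fin d → ℝ) × (Fin d → ℝ))) (hU : IsOpen U),
      π0 U = ⨆ (Kc : Compacts ((Fin d → ℝ) × (Fin d → ℝ))) (_ : (Kc : Set _) ⊆ U),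
        (C0 Kc : ℝ≥0∞) := by
    intro U hU
    rw [hπ0def, MeasureTheory.Content.measure_apply _ hU.measurableSet,
      C0.outerMeasure_of_isOpen U hU]
    rfl
  have hC0coe : ∀ Kc : Compacts ((Fin d → ℝ) × (Fin d → ℝ)),
      (C0 Kc : ℝ≥0∞) = ENNReal.ofReal (lam0 ↑Kc) := fun Kc => rfl
  have hπ0univ : π0 Set.univ = 1 := by
    rw [hopen _ isOpen_univ]
    apply le_antisymm
    · refine iSup_le fun Kc => iSup_le fun _ => ?_
      rw [hC0coe]
      calc ENNReal.ofReal (lam0 ↑Kc) ≤ ENNReal.ofReal 1 :=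
            ENNReal.ofReal_le_ofReal (hlam_le_one _)
        _ = 1 := ENNReal.ofReal_one
    · have h1 : (1 : ℝ) ≤ lam0 Q :=
        le_csInf (hne Q) (by rintro y ⟨f, hf, rfl⟩; exact hΛ_ge_one f hf.1 hf.2)
      have h2 : (1 : ℝ≥0∞) ≤ (C0 ⟨Q, hQc⟩ : ℝ≥0∞) := by
        rw [hC0coe]
        calc (1 : ℝ≥0∞) = ENNReal.ofReal 1 := ENNReal.ofReal_one.symm
          _ ≤ ENNReal.ofReal (lam0 Q) := ENNReal.ofReal_le_ofReal h1
      refine le_trans h2 ?_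
      exact @le_iSup₂ ℝ≥0∞ (Compacts ((Fin d → ℝ) × (Fin d → ℝ)))
        (fun Kc => (Kc : Set ((Fin d → ℝ) × (Fin d → ℝ))) ⊆ Set.univ) _
        (fun Kc _ => (C0 Kc : ℝ≥0∞)) ⟨Q, hQc⟩ (Set.subset_univ Q)
  haveI hπ0P : IsProbabilityMeasure π0 := ⟨hπ0univ⟩
  -- the portmanteau liminf condition for open sets
  have hliminf : ∀ U : Set ((Fin d → ℝ) × (Fin d → ℝ)), IsOpen U →
      π0 U ≤ atTop.liminf fun k => πs (φ k) U := by
    intro U hU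
    rw [hopen U hU]
    refine iSup_le fun Kc => iSup_le fun hKU => ?_
    obtain ⟨χ, hχ1, hχ0, -, hχ01⟩ :=
      exists_continuous_one_zero_of_isCompact Kc.isCompact hU.isClosed_compl
        (disjoint_compl_right_iff_subset.mpr hKU)
    obtain ⟨χb, hχb⟩ := mkb χ hχ01
    have hcand : lam0 ↑Kc ≤ Λ χb :=
      hlam_le _ _ (fun x => by rw [hχb]; exact (hχ01 x).1)
        (fun x hx => by simp [hχb, hχ1 hx])
    have hint : ∀ k, ∫ x, χb x ∂(πs (φ k)) ≤ ((πs (φ k)) U).toReal := by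
      intro k
      haveI := hπPφ k
      calc ∫ x, χb x ∂(πs (φ k))
          ≤ ∫ x, U.indicator (fun _ => (1:ℝ)) x ∂(πs (φ k)) := by
            refine integral_mono (χb.integrable _)
              ((integrable_const (1:ℝ)).indicator hU.measurableSet) fun x => ?_
            by_cases hx : x ∈ U
            · simp only [indicator_of_mem hx]
              rw [hχb]; exact (hχ01 x).2
            · simp only [indicator_of_notMem hx]
              simp [hχb, hχ0 hx]
        _ = ((πs (φ k)) U).toReal := by
            rw [integral_indicator_const _ hU.measurableSet]; simp [measureReal_def]
    calc (C0 Kc : ℝ≥0∞) = ENNReal.ofReal (lam0 ↑Kc) := hC0coe Kc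
      _ ≤ ENNReal.ofReal (Λ χb) := ENNReal.ofReal_le_ofReal hcand
      _ = atTop.liminf fun k => ENNReal.ofReal (∫ x, χb x ∂(πs (φ k))) :=
          ((ENNReal.continuous_ofReal.tendsto _).comp (hΛ χb)).liminf_eq.symm
      _ ≤ atTop.liminf fun k => πs (φ k) U := by
          refine Filter.liminf_le_liminf (Eventually.of_forall fun k => ?_)
          exact le_trans (ENNReal.ofReal_le_ofReal (hint k))
            (ENNReal.ofReal_toReal (measure_ne_top _ _)).le
  -- weak convergence along the subsequence
  have hweak : ∀ f : BoundedContinuousFunction ((Fin d → ℝ) × (Fin d → ℝ)) ℝ,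
      Tendsto (fun k => ∫ x, f x ∂(πs (φ k))) atTop (𝓝 (∫ x, f x ∂π0)) := by
    intro f
    exact BoundedContinuousFunction.tendsto_integral_of_forall_integral_le_liminf_integral
      (fun g hg =>
        MeasureTheory.integral_le_liminf_integral_of_forall_isOpen_measure_le_liminf_measure
          hg hliminf) f
  have hΛeq : ∀ f : BoundedContinuousFunction ((Fin d → ℝ) × (Fin d → ℝ)) ℝ,
      Λ f = ∫ x, f x ∂π0 := fun f => tendsto_nhds_unique (hΛ f) (hweak f)
  -- π0 is concentrated on Q
  have hπ0Q : π0 Qᶜ = 0 := by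
    rw [hopen _ hQcl.isOpen_compl]
    refine le_antisymm (iSup_le fun Kc => iSup_le fun hKQ => ?_) (by simp)
    obtain ⟨χ, hχ1, hχ0, -, hχ01⟩ :=
      exists_continuous_one_zero_of_isCompact Kc.isCompact hQcl
        (subset_compl_iff_disjoint_right.mp hKQ)
    obtain ⟨χb, hχb⟩ := mkb χ hχ01
    have hcand : lam0 ↑Kc ≤ Λ χb :=
      hlam_le _ _ (fun x => by rw [hχb]; exact (hχ01 x).1)
        (fun x hx => by simp [hχb, hχ1 hx])
    have h0 : Λ χb = 0 := hΛ_zero_on χb fun x hx => by simp [hχb, hχ0 hx]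
    rw [hC0coe]
    rw [h0] at hcand
    simp [ENNReal.ofReal_eq_zero.mpr hcand]
  -- marginals of π0
  have coeLip : LipschitzWith 1 ((↑) : ℝ≥0 → ℝ) :=
    LipschitzWith.of_dist_le_mul fun a b => by
      simp [NNReal.dist_eq, Real.dist_eq]
  have hmg : ∀ p : ((Fin d → ℝ) × (Fin d → ℝ)) → (Fin d → ℝ), Measurable p → Continuous p →
      ∀ ρ : Measure (Fin d → ℝ), IsProbabilityMeasure ρ →
      (∀ k, (πs k).map p = discretize (hs k) ρ) → π0.map p = ρ := by
    intro p hpm hpc ρ hρP hdisc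
    haveI : IsProbabilityMeasure (π0.map p) := Measure.isProbabilityMeasure_map hpm.aemeasurable
    refine ext_of_forall_lintegral_eq_of_IsFiniteMeasure ?_
    intro f
    set fR : BoundedContinuousFunction (Fin d → ℝ) ℝ :=
      BoundedContinuousFunction.comp _ coeLip f with hfRdef
    have hfR : ∀ x, fR x = (f x : ℝ) := fun _ => rfl
    have l1 : ∫⁻ x, (f x : ℝ≥0∞) ∂(π0.map p) = ENNReal.ofReal (∫ x, fR x ∂(π0.map p)) :=
      lintegral_coe_eq_integral (fun x => f x) (fR.integrable _)
    have l2 : ∫⁻ x, (f x : ℝ≥0∞) ∂ρ = ENNReal.ofReal (∫ x, fR x ∂ρ) :=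
      lintegral_coe_eq_integral (fun x => f x) (fR.integrable _)
    rw [l1, l2]
    congr 1
    -- the real integrals agree, by weak convergence
    set fc : BoundedContinuousFunction ((Fin d → ℝ) × (Fin d → ℝ)) ℝ :=
      fR.compContinuous ⟨p, hpc⟩ with hfcdef
    have e1 : ∫ x, fR x ∂(π0.map p) = ∫ q, fc q ∂π0 := by
      rw [integral_map hpm.aemeasurable fR.continuous.measurable.aestronglyMeasurable]
      rfl
    have e2 : ∀ k, ∫ q, fc q ∂(πs (φ k)) = ∫ x, fR x ∂(discretize (hs (φ k)) ρ) := by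
      intro k
      rw [← hdisc (φ k),
        integral_map hpm.aemeasurable fR.continuous.measurable.aestronglyMeasurable]
      rfl
    have t1 := hweak fc
    have t2 : Tendsto (fun k => ∫ x, fR x ∂(discretize (hs (φ k)) ρ)) atTop
        (𝓝 (∫ x, fR x ∂ρ)) :=
      (tendsto_integral_discretize hspos hslim hρP fR).comp hφ.tendsto_atTop
    rw [e1]
    refine tendsto_nhds_unique ?_ t2
    simpa only [e2] using t1
  have hmarg1 : π0.map Prod.fst = μ :=
    hmg Prod.fst measurable_fst continuous_fst μ hμ fun k => (hπs k).1.1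
  have hmarg2 : π0.map Prod.snd = ν :=
    hmg Prod.snd measurable_snd continuous_snd ν hν fun k => (hπs k).1.2
  -- a bounded continuous cutoff of the cost function
  obtain ⟨χ, hχ1, -, hχsupp, hχ01⟩ :=
    exists_continuous_one_zero_of_isCompact hQc isClosed_empty (disjoint_bot_right)
  set gfun : ((Fin d → ℝ) × (Fin d → ℝ)) → ℝ := fun x => c x * χ x with hgfun
  have hgcont : Continuous gfun := hc.mul χ.continuous
  have hgsupp : HasCompactSupport gfun := hχsupp.mul_left
  obtain ⟨Cb, hCb⟩ := hgcont.bounded_above_of_compact_support hgsupp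
  set gb : BoundedContinuousFunction ((Fin d → ℝ) × (Fin d → ℝ)) ℝ :=
    BoundedContinuousFunction.ofNormedAddCommGroup gfun hgcont Cb hCb with hgbdef
  have hgb : ∀ x, gb x = c x * χ x := fun _ => rfl
  have hgQ : Set.EqOn (⇑gb) c Q := fun x hx => by
    rw [hgb, hχ1 hx]; simp
  -- integrals of c equal integrals of gb for measures concentrated on Q
  have hcg : ∀ ρ : Measure ((Fin d → ℝ) × (Fin d → ℝ)), ρ Qᶜ = 0 →
      ∫ q, c q ∂ρ = ∫ q, gb q ∂ρ := fun ρ hρ =>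
    (integral_congr_ae (ae_eqOn hρ fun x hx => (hgQ hx).symm))
  -- conclusion: assemble everything
  refine ⟨φ, π0, hφ, hπ0P, hweak, ⟨⟨hmarg1, hmarg2⟩, ?_⟩⟩
  intro π' hπ'
  haveI hπ'P : IsProbabilityMeasure π' := prob_of_coupling hπ' hμ
  have hπ'KL : π' (K ×ˢ L)ᶜ = 0 :=
    coupling_compl_zero hπ' hK.isClosed.measurableSet hL.isClosed.measurableSet hKμ hLν
  have hπ'Q : π' Qᶜ = 0 := by
    refine measure_mono_null (Set.compl_subset_compl.mpr ?_) hπ'KL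
    exact Set.prod_mono (hKR.trans (closedBall_subset_closedBall (by linarith [lt_of_lt_of_le (hspos 0) (hH 0)])))
      (hLR.trans (closedBall_subset_closedBall (by linarith [lt_of_lt_of_le (hspos 0) (hH 0)])))
  -- the discretized couplings of π'
  set Θ : ℕ → ((Fin d → ℝ) × (Fin d → ℝ)) → ((Fin d → ℝ) × (Fin d → ℝ)) :=
    fun k => Prod.map (Tm d (hs k)) (Tm d (hs k)) with hΘdef
  have hΘmeas : ∀ k, Measurable (Θ k) :=
    fun k => (measurable_Tm (hs k)).prodMap (measurable_Tm (hs k))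
  have hΘcoupling : ∀ k, IsCoupling (π'.map (Θ k)) (discretize (hs k) μ) (discretize (hs k) ν) := by
    intro k
    constructor
    · rw [Measure.map_map measurable_fst (hΘmeas k)]
      have hcomp : (Prod.fst ∘ Θ k) = Tm d (hs k) ∘ Prod.fst := rfl
      rw [hcomp, ← Measure.map_map (measurable_Tm (hs k)) measurable_fst, hπ'.1,
        discretize_eq_map (hspos k)]
    · rw [Measure.map_map measurable_snd (hΘmeas k)]
      have hcomp : (Prod.snd ∘ Θ k) = Tm d (hs k) ∘ Prod.snd := rfl
      rw [hcomp, ← Measure.map_map (measurable_Tm (hs k)) measurable_snd, hπ'.2,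
        discretize_eq_map (hspos k)]
  have hΘQ : ∀ k, (π'.map (Θ k)) Qᶜ = 0 := by
    intro k
    rw [Measure.map_apply (hΘmeas k) hQcl.measurableSet.compl]
    refine measure_mono_null ?_ hπ'KL
    intro x hx
    simp only [Set.mem_preimage, Set.mem_compl_iff] at hx ⊢
    intro hxKL
    exact hx ⟨Tm_mem_closedBall (hspos k) (hH k) (hKR hxKL.1),
      Tm_mem_closedBall (hspos k) (hH k) (hLR hxKL.2)⟩
  -- optimality inequality passes to the limit
  have hopt : ∀ k, ∫ q, c q ∂(πs (φ k)) ≤ ∫ q, c q ∂(π'.map (Θ (φ k))) :=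
    fun k => (hπs (φ k)).2 _ (hΘcoupling (φ k))
  have hA : Tendsto (fun k => ∫ q, c q ∂(πs (φ k))) atTop (𝓝 (∫ q, c q ∂π0)) := by
    have h1 : ∀ k, ∫ q, c q ∂(πs (φ k)) = ∫ q, gb q ∂(πs (φ k)) := fun k => hcg _ (hπQ (φ k))
    rw [hcg _ hπ0Q]
    simp only [h1]
    exact hweak gb
  have hB : Tendsto (fun k => ∫ q, c q ∂(π'.map (Θ (φ k)))) atTop (𝓝 (∫ q, c q ∂π')) := by
    have h1 : ∀ k, ∫ q, c q ∂(π'.map (Θ (φ k))) = ∫ q, gb (Θ (φ k) q) ∂π' := fun k => by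
      rw [hcg _ (hΘQ (φ k)),
        integral_map (hΘmeas (φ k)).aemeasurable gb.continuous.measurable.aestronglyMeasurable]
    rw [hcg _ hπ'Q]
    simp only [h1]
    refine tendsto_integral_of_dominated_convergence (fun _ => ‖gb‖)
      (fun k => (gb.continuous.measurable.comp (hΘmeas (φ k))).aestronglyMeasurable)
      (integrable_const _) (fun k => Eventually.of_forall fun x => gb.norm_coe_le_norm _)
      (Eventually.of_forall fun x => ?_)
    have hx1 : Tendsto (fun k => Tm d (hs (φ k)) x.1) atTop (𝓝 x.1) :=
      (tendsto_Tm hspos hslim x.1).comp hφ.tendsto_atTop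
    have hx2 : Tendsto (fun k => Tm d (hs (φ k)) x.2) atTop (𝓝 x.2) :=
      (tendsto_Tm hspos hslim x.2).comp hφ.tendsto_atTop
    exact (gb.continuous.tendsto x).comp (hx1.prodMk_nhds hx2)
  exact le_of_tendsto_of_tendsto' hA hB hopt
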